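/- arXiv:1811.01840 — 3 statements merged into one kernel-verified Lean document; each statement's English description precedes it below -/
import Mathlib

section
/- ∫_{-∞}^{∞} (1 - e^{-z²} - z² e^{-z²})/z⁴ dz = (2/3)√π. -/
open Real MeasureTheory Set Filter Topology

noncomputable def Ffun (z : ℝ) : ℝ :=
  (2/3) * ∫ u in (0:ℝ)..z, Real.exp (-u^2)

-- key inequality: for 0 ≤ a, 1 - (1+a)*exp(-a) ≤ a^2/2
lemma key_le {a : ℝ} (ha : 0 ≤ a) : 1 - (1+a)*Real.exp (-a) ≤ a^2/2 := by
  set D : ℝ → ℝ := fun x => x^2/2 - 1 + (1+x)*Real.exp (-x) with hD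
  have hderiv : ∀ x : ℝ, HasDerivAt D (x * (1 - Real.exp (-x))) x := by
    intro x
    have h1 : HasDerivAt (fun x : ℝ => Real.exp (-x)) (-Real.exp (-x)) x := by
      simpa [Function.comp_def] using (Real.hasDerivAt_exp (-x)).comp x ((hasDerivAt_id x).neg)
    have h2 : HasDerivAt (fun x : ℝ => (1+x)*Real.exp (-x))
        (1 * Real.exp (-x) + (1+x) * (-Real.exp (-x))) x :=
      (((hasDerivAt_id x).const_add 1)).mul h1
    have h3 : HasDerivAt (fun x : ℝ => x^2/2 - 1) (x) x := by
      simpa using (((hasDerivAt_pow 2 x).div_const 2).sub_const 1)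
    refine (h3.add h2).congr_deriv ?_
    ring
  have hmono : Monotone D :=
    monotone_of_deriv_nonneg (fun x => (hderiv x).differentiableAt)
      (fun x => by
        rw [(hderiv x).deriv]
        rcases le_or_gt x 0 with h | h
        · have : 1 ≤ Real.exp (-x) := by
            rw [Real.one_le_exp_iff]; linarith
          nlinarith
        · have : Real.exp (-x) ≤ 1 := by
            rw [Real.exp_le_one_iff]; linarith
          nlinarith)
  have h0 : D 0 = 0 := by simp [hD]
  have := hmono ha
  rw [h0] at this
  simp only [hD] at this
  linarith

lemma key_ge {a : ℝ} (ha : 0 ≤ a) : 0 ≤ 1 - (1+a)*Real.exp (-a) := by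
  have h := Real.add_one_le_exp a
  have : (1+a) * Real.exp (-a) ≤ 1 := by
    rw [Real.exp_neg]
    have hx := Real.exp_pos a
    have hinv : Real.exp a * (Real.exp a)⁻¹ = 1 := mul_inv_cancel₀ hx.ne'
    nlinarith [inv_pos.mpr hx]
  linarith

lemma key_le_one {a : ℝ} (ha : 0 ≤ a) : 1 - (1+a)*Real.exp (-a) ≤ 1 := by
  nlinarith [Real.exp_pos (-a)]

lemma f_nonneg {x : ℝ} : 0 ≤ (1 - Real.exp (-x^2) - x^2 * Real.exp (-x^2)) / x^4 := by
  apply div_nonneg _ (by positivity)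
  have := key_ge (a := x^2) (by positivity)
  nlinarith [this]

lemma f_le_half {x : ℝ} : (1 - Real.exp (-x^2) - x^2 * Real.exp (-x^2)) / x^4 ≤ 1/2 := by
  rcases eq_or_ne x 0 with rfl | hx
  · norm_num
  · have hx4 : (0:ℝ) < x^4 := by positivity
    rw [div_le_iff₀ hx4]
    have := key_le (a := x^2) (by positivity)
    nlinarith [this]

lemma f_integrableOn :
    IntegrableOn (fun z : ℝ => (1 - Real.exp (-z^2) - z^2 * Real.exp (-z^2)) / z^4)
      (Ioi (0:ℝ)) := by
  have hmeas : AEStronglyMeasurable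
      (fun z : ℝ => (1 - Real.exp (-z^2) - z^2 * Real.exp (-z^2)) / z^4)
      (volume : Measure ℝ) := by
    have h1 : Continuous fun z : ℝ => 1 - Real.exp (-z^2) - z^2 * Real.exp (-z^2) := by
      fun_prop
    have h2 : Continuous fun z : ℝ => z^4 := by fun_prop
    exact (h1.measurable.div h2.measurable).aestronglyMeasurable
  have hIoc : IntegrableOn
      (fun z : ℝ => (1 - Real.exp (-z^2) - z^2 * Real.exp (-z^2)) / z^4) (Ioc (0:ℝ) 1) := by
    refine Measure.integrableOn_of_bounded (M := 1/2) measure_Ioc_lt_top.ne hmeas ?_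
    filter_upwards with x
    rw [Real.norm_eq_abs, abs_of_nonneg f_nonneg]
    exact f_le_half
  have hIoi1 : IntegrableOn
      (fun z : ℝ => (1 - Real.exp (-z^2) - z^2 * Real.exp (-z^2)) / z^4) (Ioi (1:ℝ)) := by
    refine Integrable.mono' (g := fun x : ℝ => x ^ (-4 : ℝ))
      (integrableOn_Ioi_rpow_of_lt (by norm_num) one_pos) hmeas.restrict ?_
    rw [ae_restrict_iff' measurableSet_Ioi]
    filter_upwards with x hx
    have hx1 : (1:ℝ) < x := hx
    have hx0 : (0:ℝ) < x := by linarith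
    rw [Real.norm_eq_abs, abs_of_nonneg f_nonneg]
    have h4 : x ^ (-4 : ℝ) = (x^4)⁻¹ := by
      rw [show (-4 : ℝ) = -(4:ℕ) by norm_num, Real.rpow_neg hx0.le, Real.rpow_natCast]
    rw [h4, div_le_iff₀ (by positivity), inv_mul_cancel₀ (by positivity)]
    have := key_le_one (a := x^2) (by positivity)
    nlinarith [this]
  rw [← Ioc_union_Ioi_eq_Ioi (by norm_num : (0:ℝ) ≤ 1)]
  exact hIoc.union hIoi1

noncomputable def Fprim (z : ℝ) : ℝ :=
  (2/3) * (∫ u in (0:ℝ)..z, Real.exp (-u^2)) - (1 - (1+z^2)*Real.exp (-z^2)) / (3*z^3)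

lemma cont_exp_neg_sq : Continuous fun u : ℝ => Real.exp (-u^2) := by fun_prop

lemma hasDerivAt_primA (x : ℝ) :
    HasDerivAt (fun z : ℝ => ∫ u in (0:ℝ)..z, Real.exp (-u^2)) (Real.exp (-x^2)) x := by
  exact intervalIntegral.integral_hasDerivAt_right
    (cont_exp_neg_sq.intervalIntegrable _ _)
    (cont_exp_neg_sq.stronglyMeasurableAtFilter _ _)
    cont_exp_neg_sq.continuousAt

lemma hasDerivAt_num (x : ℝ) :
    HasDerivAt (fun z : ℝ => 1 - (1+z^2)*Real.exp (-z^2)) (2*x^3*Real.exp (-x^2)) x := by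
  have hE : HasDerivAt (fun z : ℝ => Real.exp (-z^2)) (-(2*x)*Real.exp (-x^2)) x := by
    have := (Real.hasDerivAt_exp (-x^2)).comp x ((hasDerivAt_pow 2 x).neg)
    simpa [mul_comm, Function.comp_def, Pi.neg_def] using this
  have hP : HasDerivAt (fun z : ℝ => 1 + z^2) (2*x) x := by
    simpa using ((hasDerivAt_pow 2 x).const_add 1)
  have := (hP.mul hE).const_sub 1
  refine this.congr_deriv ?_
  ring

lemma hasDerivAt_Fprim {x : ℝ} (hx : x ≠ 0) :
    HasDerivAt Fprim ((1 - Real.exp (-x^2) - x^2 * Real.exp (-x^2)) / x^4) x := by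
  have hden : HasDerivAt (fun z : ℝ => 3*z^3) (9*x^2) x := by
    have := (hasDerivAt_pow 3 x).const_mul 3
    refine this.congr_deriv ?_
    ring
  have hdiv := (hasDerivAt_num x).div hden (by positivity : (3:ℝ)*x^3 ≠ 0)
  have := ((hasDerivAt_primA x).const_mul (2/3)).sub hdiv
  refine this.congr_deriv ?_
  have h3 : (3*x^3)^2 ≠ 0 := by positivity
  field_simp
  ring

lemma Fprim_zero : Fprim 0 = 0 := by simp [Fprim]

lemma Fprim_contWithinAt : ContinuousWithinAt Fprim (Ici (0:ℝ)) 0 := by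
  have hA : ContinuousWithinAt
      (fun z : ℝ => (2/3) * ∫ u in (0:ℝ)..z, Real.exp (-u^2)) (Ici (0:ℝ)) 0 := by
    have h := (hasDerivAt_primA 0).continuousAt
    have h2 : ContinuousAt (fun z : ℝ => (2/3) * ∫ u in (0:ℝ)..z, Real.exp (-u^2)) 0 :=
      h.const_mul _
    exact h2.continuousWithinAt
  have hB : ContinuousWithinAt
      (fun z : ℝ => (1 - (1+z^2)*Real.exp (-z^2)) / (3*z^3)) (Ici (0:ℝ)) 0 := by
    have h0 : (fun z : ℝ => (1 - (1+z^2)*Real.exp (-z^2)) / (3*z^3)) 0 = 0 := by simp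
    unfold ContinuousWithinAt
    rw [h0]
    apply squeeze_zero' (g := fun z : ℝ => z/6)
    · filter_upwards [self_mem_nhdsWithin] with x (hx : (0:ℝ) ≤ x)
      apply div_nonneg _ (by positivity)
      exact key_ge (by positivity)
    · filter_upwards [self_mem_nhdsWithin] with x (hx : (0:ℝ) ≤ x)
      rcases eq_or_lt_of_le hx with rfl | hx0
      · simp
      · rw [div_le_iff₀ (by positivity)]
        have := key_le (a := x^2) (by positivity)
        nlinarith [this]
    · have : Tendsto (fun z : ℝ => z/6) (𝓝 0) (𝓝 (0/6)) :=
        (continuous_id.div_const 6).tendsto 0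
      simpa using this.mono_left nhdsWithin_le_nhds
  exact hA.sub hB

lemma Fprim_tendsto_atTop : Tendsto Fprim atTop (𝓝 (Real.sqrt π / 3)) := by
  have hint : IntegrableOn (fun u : ℝ => Real.exp (-u^2)) (Ioi (0:ℝ)) := by
    have := (integrable_exp_neg_mul_sq (by norm_num : (0:ℝ) < 1)).integrableOn
      (s := Ioi (0:ℝ))
    simpa using this
  have hval : ∫ x in Ioi (0:ℝ), Real.exp (-x^2) = Real.sqrt π / 2 := by
    have := integral_gaussian_Ioi 1
    simpa using this
  have hA : Tendsto (fun z : ℝ => ∫ u in (0:ℝ)..z, Real.exp (-u^2)) atTop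
      (𝓝 (Real.sqrt π / 2)) := by
    have h := intervalIntegral_tendsto_integral_Ioi 0 hint tendsto_id
    rw [hval] at h
    exact h
  have hB : Tendsto (fun z : ℝ => (1 - (1+z^2)*Real.exp (-z^2)) / (3*z^3)) atTop (𝓝 0) := by
    apply squeeze_zero' (g := fun z : ℝ => 1/(3*z^3))
    · filter_upwards [Ioi_mem_atTop (0:ℝ)] with x (hx : (0:ℝ) < x)
      apply div_nonneg _ (by positivity)
      exact key_ge (by positivity)
    · filter_upwards [Ioi_mem_atTop (0:ℝ)] with x (hx : (0:ℝ) < x)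
      have h1 := key_le_one (a := x^2) (by positivity)
      gcongr
    · have h3 : Tendsto (fun z : ℝ => 3*z^3) atTop atTop :=
        (tendsto_pow_atTop (by norm_num : 3 ≠ 0)).const_mul_atTop (by norm_num)
      exact h3.inv_tendsto_atTop.congr fun z => (one_div _).symm
  have := (hA.const_mul ((2:ℝ)/3)).sub hB
  simp only [sub_zero] at this
  have heq : (2:ℝ)/3 * (Real.sqrt π / 2) = Real.sqrt π / 3 := by ring
  rw [heq] at this
  exact this.congr (fun z => rfl)

theorem integral_one_sub_exp_sub_sq_exp_div_quartic :
    ∫ z : ℝ, (1 - Real.exp (-z ^ 2) - z ^ 2 * Real.exp (-z ^ 2)) / z ^ 4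
      = (2 / 3) * Real.sqrt π := by
  have hIoi : ∫ z in Ioi (0:ℝ), (1 - Real.exp (-z^2) - z^2 * Real.exp (-z^2)) / z^4
      = Real.sqrt π / 3 := by
    have h := integral_Ioi_of_hasDerivAt_of_tendsto (a := 0) (m := Real.sqrt π / 3)
      Fprim_contWithinAt (fun x hx => hasDerivAt_Fprim (ne_of_gt hx))
      f_integrableOn Fprim_tendsto_atTop
    rw [Fprim_zero, sub_zero] at h
    exact h
  have heq : (fun z : ℝ => (1 - Real.exp (-z ^ 2) - z ^ 2 * Real.exp (-z ^ 2)) / z ^ 4)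
      = fun z : ℝ =>
        (fun x : ℝ => (1 - Real.exp (-x ^ 2) - x ^ 2 * Real.exp (-x ^ 2)) / x ^ 4) |z| := by
    funext z
    have h2 : |z| ^ 2 = z ^ 2 := sq_abs z
    have h4 : |z| ^ 4 = z ^ 4 := by
      rw [← abs_pow, abs_of_nonneg (by positivity : (0:ℝ) ≤ z ^ 4)]
    simp only [h2, h4]
  rw [heq, integral_comp_abs
    (f := fun x : ℝ => (1 - Real.exp (-x ^ 2) - x ^ 2 * Real.exp (-x ^ 2)) / x ^ 4), hIoi]
  ring
end

section
/- For every x > 0, the function g(x) = ∫_{-∞}^{∞} (1 - e^{-x z²} - x z² e^{-x z²})/z⁴ dz is well-defined, satisfies g(x) → 0 as x → 0⁺, and g'(x) = ∫_{-∞}^{∞} x e^{-x z²} dz = √(π x); consequently g(1) = (2/3)√π. -/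
open Real MeasureTheory Filter Topology

lemma antider {x z : ℝ} (hz : z ≠ 0) :
    ∫ s in (0:ℝ)..x, s * Real.exp (-s * z ^ 2)
      = (1 - Real.exp (-x * z ^ 2) - x * z ^ 2 * Real.exp (-x * z ^ 2)) / z ^ 4 := by
  have hz4 : z ^ 4 ≠ 0 := pow_ne_zero _ hz
  have key : ∀ s ∈ Set.uIcc (0:ℝ) x, HasDerivAt
      (fun s => (1 - Real.exp (-s * z ^ 2) - s * z ^ 2 * Real.exp (-s * z ^ 2)) / z ^ 4)
      (s * Real.exp (-s * z ^ 2)) s := by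
    intro s _
    have h0 : HasDerivAt (fun s : ℝ => -s * z ^ 2) (-z ^ 2) s := by
      simpa using (hasDerivAt_id s).neg.mul_const (z ^ 2)
    have h1 := h0.exp
    have h2 : HasDerivAt (fun s : ℝ => s * z ^ 2) (z ^ 2) s := by
      simpa using (hasDerivAt_id s).mul_const (z ^ 2)
    have h3 := h2.mul h1
    have h4 := (((hasDerivAt_const s (1:ℝ)).sub h1).sub h3).div_const (z ^ 4)
    refine h4.congr_deriv ?_
    rw [div_eq_iff hz4]
    ring
  rw [intervalIntegral.integral_eq_sub_of_hasDerivAt key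
    ((Continuous.intervalIntegrable (by fun_prop) _ _))]
  simp

lemma inner_int {s : ℝ} (hs : 0 < s) :
    ∫ z : ℝ, s * Real.exp (-s * z ^ 2) = Real.sqrt π * Real.sqrt s := by
  rw [integral_const_mul, integral_gaussian, Real.sqrt_div pi_pos.le]
  calc s * (Real.sqrt π / Real.sqrt s) = Real.sqrt π * (s / Real.sqrt s) := by ring
  _ = Real.sqrt π * Real.sqrt s := by rw [Real.div_sqrt]

lemma prod_int {x : ℝ} (hx : 0 < x) :
    Integrable (fun p : ℝ × ℝ => p.1 * Real.exp (-p.1 * p.2 ^ 2))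
      ((volume.restrict (Set.Ioc 0 x)).prod volume) := by
  rw [integrable_prod_iff (by exact Continuous.aestronglyMeasurable (by fun_prop))]
  constructor
  · filter_upwards [ae_restrict_mem measurableSet_Ioc] with s hs
    exact (integrable_exp_neg_mul_sq hs.1).const_mul s
  · apply Integrable.congr (f := fun s : ℝ => Real.sqrt π * Real.sqrt s)
    · exact (continuous_const.mul Real.continuous_sqrt).integrableOn_Ioc
    · filter_upwards [ae_restrict_mem measurableSet_Ioc] with s hs
      rw [← inner_int hs.1]
      congr 1
      ext z
      rw [Real.norm_eq_abs, abs_of_nonneg (mul_nonneg hs.1.le (Real.exp_pos _).le)]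

lemma g_formula {x : ℝ} (hx : 0 < x) :
    Integrable (fun z : ℝ =>
        (1 - Real.exp (-x * z ^ 2) - x * z ^ 2 * Real.exp (-x * z ^ 2)) / z ^ 4) ∧
    (∫ z : ℝ, (1 - Real.exp (-x * z ^ 2) - x * z ^ 2 * Real.exp (-x * z ^ 2)) / z ^ 4)
      = 2 / 3 * Real.sqrt π * (x * Real.sqrt x) := by
  have hprod := prod_int hx
  have hzae : ∀ᵐ z : ℝ, z ≠ 0 := by
    filter_upwards [compl_mem_ae_iff.mpr (measure_singleton (0:ℝ))] with z hz
    simpa using hz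
  have hinner : ∀ᵐ z : ℝ, (∫ s in Set.Ioc (0:ℝ) x, s * Real.exp (-s * z ^ 2))
      = (1 - Real.exp (-x * z ^ 2) - x * z ^ 2 * Real.exp (-x * z ^ 2)) / z ^ 4 := by
    filter_upwards [hzae] with z hz
    rw [← intervalIntegral.integral_of_le hx.le, antider hz]
  constructor
  · exact (hprod.integral_prod_right).congr hinner
  · have hswap := MeasureTheory.integral_integral_swap
      (f := fun s z => s * Real.exp (-s * z ^ 2)) hprod
    rw [← integral_congr_ae hinner, ← hswap]
    have h5 : (∫ s in Set.Ioc (0:ℝ) x, ∫ z : ℝ, s * Real.exp (-s * z ^ 2))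
        = ∫ s in Set.Ioc (0:ℝ) x, Real.sqrt π * Real.sqrt s := by
      apply integral_congr_ae
      filter_upwards [ae_restrict_mem measurableSet_Ioc] with s hs
      exact inner_int hs.1
    have h6 : (∫ s in (0:ℝ)..x, Real.sqrt s) = ∫ s in (0:ℝ)..x, s ^ ((1:ℝ)/2) := by
      apply intervalIntegral.integral_congr
      intro s hs
      rw [Set.uIcc_of_le hx.le] at hs
      exact Real.sqrt_eq_rpow s
    rw [h5, ← intervalIntegral.integral_of_le hx.le, intervalIntegral.integral_const_mul,
      h6, integral_rpow (Or.inl (by norm_num))]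
    have h1 : x ^ ((1:ℝ)/2 + 1) = x * Real.sqrt x := by
      rw [Real.rpow_add hx, Real.rpow_one, ← Real.sqrt_eq_rpow]
      ring
    rw [h1, Real.zero_rpow (by norm_num)]
    ring

theorem g_integral_family :
    let g : ℝ → ℝ := fun x =>
      ∫ z : ℝ, (1 - Real.exp (-x * z ^ 2) - x * z ^ 2 * Real.exp (-x * z ^ 2)) / z ^ 4
    (∀ x > (0 : ℝ), Integrable
      (fun z : ℝ => (1 - Real.exp (-x * z ^ 2) - x * z ^ 2 * Real.exp (-x * z ^ 2)) / z ^ 4)) ∧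
    Tendsto g (𝓝[>] 0) (𝓝 0) ∧
    (∀ x > (0 : ℝ),
      (∫ z : ℝ, x * Real.exp (-x * z ^ 2)) = Real.sqrt (π * x) ∧
      HasDerivAt g (Real.sqrt (π * x)) x) ∧
    g 1 = (2 / 3) * Real.sqrt π := by
  intro g
  have hg : ∀ x : ℝ, 0 < x → g x = 2 / 3 * Real.sqrt π * (x * Real.sqrt x) :=
    fun x hx => (g_formula hx).2
  have hsqrtmul : ∀ x : ℝ, 0 ≤ x → Real.sqrt (π * x) = Real.sqrt π * Real.sqrt x :=
    fun x _ => Real.sqrt_mul pi_pos.le x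
  refine ⟨fun x hx => (g_formula hx).1, ?_, fun x hx => ⟨?_, ?_⟩, ?_⟩
  · have hc : Tendsto (fun x : ℝ => 2 / 3 * Real.sqrt π * (x * Real.sqrt x)) (𝓝[>] 0)
        (𝓝 0) := by
      have : Continuous fun x : ℝ => 2 / 3 * Real.sqrt π * (x * Real.sqrt x) := by fun_prop
      have h := this.tendsto 0
      rw [show (2 / 3 * Real.sqrt π * ((0:ℝ) * Real.sqrt 0)) = 0 by simp] at h
      exact h.mono_left nhdsWithin_le_nhds
    apply hc.congr'
    filter_upwards [self_mem_nhdsWithin] with x hx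
    exact (hg x hx).symm
  · rw [inner_int hx, hsqrtmul x hx.le]
  · have hs : HasDerivAt Real.sqrt (1 / (2 * Real.sqrt x)) x := Real.hasDerivAt_sqrt hx.ne'
    have h2 : HasDerivAt (fun y : ℝ => y * Real.sqrt y)
        (1 * Real.sqrt x + x * (1 / (2 * Real.sqrt x))) x := (hasDerivAt_id x).mul hs
    have h3 := h2.const_mul (2 / 3 * Real.sqrt π)
    have hx' : Real.sqrt x ≠ 0 := (Real.sqrt_pos.2 hx).ne'
    have hval : 2 / 3 * Real.sqrt π * (1 * Real.sqrt x + x * (1 / (2 * Real.sqrt x)))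
        = Real.sqrt (π * x) := by
      have h9 : x * (1 / (2 * Real.sqrt x)) = Real.sqrt x / 2 := by
        rw [mul_one_div, div_eq_div_iff (by positivity) (by norm_num : (2:ℝ) ≠ 0)]
        nlinarith [Real.mul_self_sqrt hx.le]
      rw [hsqrtmul x hx.le, h9]
      ring
    rw [← hval]
    apply h3.congr_of_eventuallyEq
    filter_upwards [Ioi_mem_nhds hx] with y hy
    exact hg y hy
  · rw [hg 1 one_pos]
    simp
end

section
/- For ε > 0, ∫_{t-ε}^{t} ∫_{-∞}^{∞} s² (1 - e^{-λ} - λ e^{-λ})/(λ²(t-τ)²) ds dτ = 16√(πε), where λ = s²/(4(t-τ)). -/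
open Real MeasureTheory intervalIntegral Set Filter

private lemma N_nonneg {x : ℝ} (hx : 0 ≤ x) :
    0 ≤ 1 - Real.exp (-x) - x * Real.exp (-x) := by
  have h1 : (x + 1) * Real.exp (-x) ≤ Real.exp x * Real.exp (-x) :=
    mul_le_mul_of_nonneg_right (Real.add_one_le_exp x) (Real.exp_pos _).le
  rw [← Real.exp_add, add_neg_cancel, Real.exp_zero] at h1
  nlinarith

private lemma one_sub_exp_le {x : ℝ} : 1 - Real.exp (-x) ≤ x := by
  have := Real.add_one_le_exp (-x); linarith

private lemma one_sub_exp_nonneg {x : ℝ} (hx : 0 ≤ x) : 0 ≤ 1 - Real.exp (-x) := by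
  have : Real.exp (-x) ≤ Real.exp 0 := Real.exp_le_exp.mpr (by linarith)
  rw [Real.exp_zero] at this; linarith

private lemma gauss_cont (a : ℝ) : Continuous (fun u : ℝ => Real.exp (-(u ^ 2 / (4 * a)))) := by
  continuity

private lemma gauss_integrable (a : ℝ) (ha : 0 < a) :
    Integrable (fun u : ℝ => Real.exp (-(u ^ 2 / (4 * a)))) := by
  have h := integrable_exp_neg_mul_sq (b := 1 / (4 * a)) (by positivity)
  have heq : (fun u : ℝ => Real.exp (-(u ^ 2 / (4 * a))))
      = fun u : ℝ => Real.exp (-(1 / (4 * a)) * u ^ 2) := by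
    funext u; congr 1; field_simp
  rw [heq]; exact h

private lemma gauss_Ioi (a : ℝ) (ha : 0 < a) :
    ∫ u in Ioi (0 : ℝ), Real.exp (-(u ^ 2 / (4 * a))) = Real.sqrt (π * a) := by
  have heq : (fun u : ℝ => Real.exp (-(u ^ 2 / (4 * a))))
      = fun u : ℝ => Real.exp (-(1 / (4 * a)) * u ^ 2) := by
    funext u; congr 1; field_simp
  rw [heq, integral_gaussian_Ioi]
  have h1 : π / (1 / (4 * a)) = 4 * (π * a) := by field_simp
  rw [h1, show (4 : ℝ) * (π * a) = 2 ^ 2 * (π * a) by norm_num,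
    Real.sqrt_mul (by positivity) (π * a), Real.sqrt_sq (by norm_num : (0:ℝ) ≤ 2)]
  ring

private lemma inner_integral (a : ℝ) (ha : 0 < a) :
    ∫ s : ℝ, s ^ 2 * (1 - Real.exp (-(s ^ 2 / (4 * a)))
          - (s ^ 2 / (4 * a)) * Real.exp (-(s ^ 2 / (4 * a))))
          / ((s ^ 2 / (4 * a)) ^ 2 * a ^ 2)
      = 8 * Real.sqrt π * (Real.sqrt a)⁻¹ := by
  have ha' : a ≠ 0 := ha.ne'
  have hsa : Real.sqrt a ≠ 0 := by positivity
  set g : ℝ → ℝ := fun s => 16 * (1 - Real.exp (-(s ^ 2 / (4 * a)))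
          - (s ^ 2 / (4 * a)) * Real.exp (-(s ^ 2 / (4 * a)))) / s ^ 2 with hgdef
  have hgeq : ∀ s : ℝ, s ^ 2 * (1 - Real.exp (-(s ^ 2 / (4 * a)))
          - (s ^ 2 / (4 * a)) * Real.exp (-(s ^ 2 / (4 * a))))
          / ((s ^ 2 / (4 * a)) ^ 2 * a ^ 2) = g s := by
    intro s
    by_cases hs : s = 0
    · simp [hs, hgdef]
    · simp only [hgdef]
      obtain ⟨E, hE⟩ : ∃ E, Real.exp (-(s ^ 2 / (4 * a))) = E := ⟨_, rfl⟩
      rw [hE]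
      field_simp
      ring
  simp_rw [hgeq]
  -- even function trick
  have heven : ∫ s : ℝ, g s = 2 * ∫ s in Ioi (0 : ℝ), g s := by
    rw [← integral_comp_abs (f := g)]
    congr 1; funext s
    rw [hgdef]; simp only; rw [sq_abs]
  rw [heven]
  -- antiderivative
  set Φ : ℝ → ℝ := fun s => -16 * ((1 - Real.exp (-(s ^ 2 / (4 * a)))) / s)
      + (4 / a) * ∫ u in (0:ℝ)..s, Real.exp (-(u ^ 2 / (4 * a))) with hΦdef
  have hΦ0 : Φ 0 = 0 := by
    rw [hΦdef]; simp
  have hderiv : ∀ s ∈ Ioi (0 : ℝ), HasDerivAt Φ (g s) s := by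
    intro s hs
    have hs0 : s ≠ 0 := ne_of_gt hs
    have hlam : HasDerivAt (fun x : ℝ => x ^ 2 / (4 * a)) (s / (2 * a)) s := by
      have h := (hasDerivAt_pow 2 s).div_const (4 * a)
      refine h.congr_deriv ?_
      push_cast; field_simp; ring
    have hexp : HasDerivAt (fun x : ℝ => Real.exp (-(x ^ 2 / (4 * a))))
        (Real.exp (-(s ^ 2 / (4 * a))) * (-(s / (2 * a)))) s := hlam.neg.exp
    have hdiv := ((hasDerivAt_const s (1:ℝ)).sub hexp).div (hasDerivAt_id s) hs0
    have hFTC : HasDerivAt (fun x : ℝ => ∫ u in (0:ℝ)..x, Real.exp (-(u ^ 2 / (4 * a))))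
        (Real.exp (-(s ^ 2 / (4 * a)))) s :=
      intervalIntegral.integral_hasDerivAt_right
        ((gauss_cont a).intervalIntegrable _ _)
        ((gauss_cont a).stronglyMeasurableAtFilter _ _)
        (gauss_cont a).continuousAt
    have h := (hdiv.const_mul (-16 : ℝ)).add (hFTC.const_mul (4 / a))
    refine h.congr_deriv ?_
    simp only [hgdef, id_eq, Pi.sub_apply]
    obtain ⟨E, hE⟩ : ∃ E, Real.exp (-(s ^ 2 / (4 * a))) = E := ⟨_, rfl⟩
    rw [hE]
    field_simp
    ring
  have hpos : ∀ s ∈ Ioi (0 : ℝ), 0 ≤ g s := by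
    intro s hs
    rw [hgdef]
    have hx : (0:ℝ) ≤ s ^ 2 / (4 * a) := by positivity
    have := N_nonneg hx
    positivity
  have hcont : ContinuousWithinAt Φ (Ici 0) 0 := by
    rw [ContinuousWithinAt, hΦ0]
    have hc2 : Tendsto (fun s : ℝ => (4 / a) * ∫ u in (0:ℝ)..s, Real.exp (-(u ^ 2 / (4 * a))))
        (nhdsWithin 0 (Ici 0)) (nhds 0) := by
      have hFTC0 : HasDerivAt (fun x : ℝ => ∫ u in (0:ℝ)..x, Real.exp (-(u ^ 2 / (4 * a))))
          (Real.exp (-((0:ℝ) ^ 2 / (4 * a)))) 0 :=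
        intervalIntegral.integral_hasDerivAt_right
          ((gauss_cont a).intervalIntegrable _ _)
          ((gauss_cont a).stronglyMeasurableAtFilter _ _)
          (gauss_cont a).continuousAt
      have h2 : Tendsto (fun s : ℝ => (4 / a) * ∫ u in (0:ℝ)..s, Real.exp (-(u ^ 2 / (4 * a))))
          (nhdsWithin 0 (Ici 0))
          (nhds ((4 / a) * ∫ u in (0:ℝ)..(0:ℝ), Real.exp (-(u ^ 2 / (4 * a))))) :=
        (hFTC0.continuousAt.tendsto.const_mul (4 / a)).mono_left nhdsWithin_le_nhds
      simpa using h2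
    have hc1 : Tendsto (fun s : ℝ => -16 * ((1 - Real.exp (-(s ^ 2 / (4 * a)))) / s))
        (nhdsWithin 0 (Ici 0)) (nhds 0) := by
      apply squeeze_zero_norm' (a := fun s : ℝ => 16 * (s / (4 * a)))
      · filter_upwards [self_mem_nhdsWithin] with s (hs : s ∈ Ici 0)
        rcases eq_or_lt_of_le (α := ℝ) hs with h | h
        · simp [← h]
        · have hx : (0:ℝ) ≤ s ^ 2 / (4 * a) := by positivity
          have hb1 : 0 ≤ 1 - Real.exp (-(s ^ 2 / (4 * a))) := one_sub_exp_nonneg hx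
          have hb2 : 1 - Real.exp (-(s ^ 2 / (4 * a))) ≤ s ^ 2 / (4 * a) := one_sub_exp_le
          have hq : 0 ≤ (1 - Real.exp (-(s ^ 2 / (4 * a)))) / s := div_nonneg hb1 h.le
          calc ‖-16 * ((1 - Real.exp (-(s ^ 2 / (4 * a)))) / s)‖
              = 16 * ((1 - Real.exp (-(s ^ 2 / (4 * a)))) / s) := by
                rw [norm_mul, Real.norm_eq_abs, Real.norm_eq_abs, abs_of_nonneg hq]
                norm_num
            _ ≤ 16 * ((s ^ 2 / (4 * a)) / s) := by gcongr
            _ = 16 * (s / (4 * a)) := by field_simp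
      · have hc : Continuous (fun s : ℝ => 16 * (s / (4 * a))) := by continuity
        have h := (hc.tendsto 0).mono_left (nhdsWithin_le_nhds (s := Ici (0:ℝ)))
        simpa using h
    have h := hc1.add hc2
    rw [add_zero] at h
    exact h
  have htend : Tendsto Φ atTop (nhds (4 * Real.sqrt π * (Real.sqrt a)⁻¹)) := by
    have hlim : (4 / a) * Real.sqrt (π * a) = 4 * Real.sqrt π * (Real.sqrt a)⁻¹ := by
      rw [Real.sqrt_mul pi_pos.le a]
      field_simp
      nlinarith [Real.mul_self_sqrt ha.le, Real.sqrt_nonneg π, Real.sqrt_nonneg a]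
    have hc2 : Tendsto (fun s : ℝ => (4 / a) * ∫ u in (0:ℝ)..s, Real.exp (-(u ^ 2 / (4 * a))))
        atTop (nhds ((4 / a) * Real.sqrt (π * a))) := by
      have h := MeasureTheory.intervalIntegral_tendsto_integral_Ioi (μ := volume)
        (b := fun s : ℝ => s) (f := fun u : ℝ => Real.exp (-(u ^ 2 / (4 * a)))) 0
        ((gauss_integrable a ha).integrableOn) tendsto_id
      rw [gauss_Ioi a ha] at h
      exact h.const_mul _
    have hc1 : Tendsto (fun s : ℝ => -16 * ((1 - Real.exp (-(s ^ 2 / (4 * a)))) / s))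
        atTop (nhds 0) := by
      apply squeeze_zero_norm' (a := fun s : ℝ => 16 / s)
      · filter_upwards [eventually_gt_atTop (0:ℝ)] with s hs
        have hx : (0:ℝ) ≤ s ^ 2 / (4 * a) := by positivity
        have hb1 : 0 ≤ 1 - Real.exp (-(s ^ 2 / (4 * a))) := one_sub_exp_nonneg hx
        have hb2 : 1 - Real.exp (-(s ^ 2 / (4 * a))) ≤ 1 := by
          have := Real.exp_pos (-(s ^ 2 / (4 * a))); linarith
        have hq : 0 ≤ (1 - Real.exp (-(s ^ 2 / (4 * a)))) / s := div_nonneg hb1 hs.le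
        calc ‖-16 * ((1 - Real.exp (-(s ^ 2 / (4 * a)))) / s)‖
            = 16 * ((1 - Real.exp (-(s ^ 2 / (4 * a)))) / s) := by
              rw [norm_mul, Real.norm_eq_abs, Real.norm_eq_abs, abs_of_nonneg hq]
              norm_num
          _ ≤ 16 * (1 / s) := by gcongr
          _ = 16 / s := by ring
      · simpa using tendsto_inv_atTop_zero.const_mul (16:ℝ) |>.congr
          (fun s => by rw [div_eq_mul_inv])
    have h := hc1.add hc2
    rw [zero_add, hlim] at h
    exact h
  have hIoi : ∫ s in Ioi (0:ℝ), g s = 4 * Real.sqrt π * (Real.sqrt a)⁻¹ := by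
    rw [integral_Ioi_of_hasDerivAt_of_nonneg hcont hderiv hpos htend, hΦ0, sub_zero]
  rw [hIoi]; ring

theorem double_integral_s_sq_kernel (t ε : ℝ) (hε : 0 < ε) :
    ∫ τ in (t - ε)..t, ∫ s : ℝ,
        s ^ 2 * (1 - Real.exp (-(s ^ 2 / (4 * (t - τ))))
          - (s ^ 2 / (4 * (t - τ))) * Real.exp (-(s ^ 2 / (4 * (t - τ)))))
          / ((s ^ 2 / (4 * (t - τ))) ^ 2 * (t - τ) ^ 2)
      = 16 * Real.sqrt (π * ε) := by
  have hle : t - ε ≤ t := by linarith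
  have hcong : Set.EqOn
      (fun τ => ∫ s : ℝ,
        s ^ 2 * (1 - Real.exp (-(s ^ 2 / (4 * (t - τ))))
          - (s ^ 2 / (4 * (t - τ))) * Real.exp (-(s ^ 2 / (4 * (t - τ)))))
          / ((s ^ 2 / (4 * (t - τ))) ^ 2 * (t - τ) ^ 2))
      (fun τ => 8 * Real.sqrt π * ((t - τ) ^ (-(1/2) : ℝ)))
      (Set.uIcc (t - ε) t) := by
    intro τ hτ
    rw [Set.uIcc_of_le hle] at hτ
    rcases eq_or_lt_of_le hτ.2 with heq | hlt
    · have h0 : t - τ = 0 := by rw [heq]; ring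
      simp only [h0]
      rw [Real.zero_rpow (by norm_num : (-(1/2) : ℝ) ≠ 0)]
      simp
    · have ha : 0 < t - τ := by linarith
      have := inner_integral (t - τ) ha
      simp only
      rw [this]
      rw [Real.rpow_neg (by linarith : (0:ℝ) ≤ t - τ), ← Real.sqrt_eq_rpow]
  rw [intervalIntegral.integral_congr hcong]
  have hcomp : (∫ τ in (t - ε)..t, 8 * Real.sqrt π * ((t - τ) ^ (-(1/2) : ℝ)))
      = ∫ u in (t - t)..(t - (t - ε)), 8 * Real.sqrt π * (u ^ (-(1/2) : ℝ)) :=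
    intervalIntegral.integral_comp_sub_left (fun u => 8 * Real.sqrt π * (u ^ (-(1/2) : ℝ))) t
  rw [hcomp, show t - t = 0 by ring, show t - (t - ε) = ε by ring]
  rw [intervalIntegral.integral_const_mul]
  rw [integral_rpow (Or.inl (by norm_num : (-1:ℝ) < -(1/2)))]
  rw [show (-(1/2) : ℝ) + 1 = 1/2 by norm_num]
  rw [Real.zero_rpow (by norm_num : ((1:ℝ)/2) ≠ 0), ← Real.sqrt_eq_rpow,
    Real.sqrt_mul pi_pos.le ε]
  ring
end
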